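/- Let T : M_k → M_m be a positive map such that T(Id) and T*(Id) are positive definite, and suppose there are orthogonal projections V_i ∈ M_k, W_i ∈ M_m (1 ≤ i ≤ s) with V_iV_j = 0 and W_iW_j = 0 for i ≠ j, Id = Σ V_i, Id = Σ W_i, and T(V_i M_k V_i) ⊆ W_i M_m W_i for all i. Then the scaling matrices X_n ∈ M_k and Y_n ∈ M_m produced by the Sinkhorn-type scaling algorithm commute with every V_i and W_i respectively: X_n V_i = V_i X_n and Y_n W_i = W_i Y_n for all i and n. -/

import Mathlib

open Matrix BigOperators
open scoped ComplexOrder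

/-- A (possibly rectangular, as long as the index types have the same cardinality)
matrix has support if some generalized permutation diagonal has nonzero product. -/
def HasSupport {R C α : Type*} [Fintype R] [Fintype C] [CommMonoidWithZero α]
    (A : Matrix R C α) : Prop :=
  ∃ σ : R ≃ C, ∏ i, A i (σ i) ≠ 0

/-- Total support: every nonzero entry lies on a nonzero generalized permutation diagonal. -/
def HasTotalSupport {R C α : Type*} [Fintype R] [Fintype C] [CommMonoidWithZero α]
    (A : Matrix R C α) : Prop :=
  ∀ p q, A p q ≠ 0 → ∃ σ : R ≃ C, σ p = q ∧ ∏ i, A i (σ i) ≠ 0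

/-- The Kronecker product `A ⊗ 1_{m×k}` of `A ∈ M_{k×m}` with the all-ones matrix `1_{m×k}`. -/
def kronOnes {R C α : Type*} (A : Matrix R C α) : Matrix (R × C) (C × R) α :=
  Matrix.of fun p q => A p.1 q.1

/-- A rectangular matrix has support if `A ⊗ 1_{m×k}` has support. -/
def RectSupport {R C α : Type*} [Fintype R] [Fintype C] [CommMonoidWithZero α]
    (A : Matrix R C α) : Prop :=
  HasSupport (kronOnes A)

/-- A rectangular matrix has total support if `A ⊗ 1_{m×k}` has total support. -/
def RectTotalSupport {R C α : Type*} [Fintype R] [Fintype C] [CommMonoidWithZero α]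
    (A : Matrix R C α) : Prop :=
  HasTotalSupport (kronOnes A)

/-- A positive map `T : M_k → M_m` has support if for all orthonormal bases
`{v_i}` of `ℂ^k` and `{w_j}` of `ℂ^m`, the matrix `(tr(T(v_i v_i*) w_j w_j*))` has
support as a rectangular matrix. -/
def MapSupport {k m : ℕ}
    (T : Matrix (Fin k) (Fin k) ℂ → Matrix (Fin m) (Fin m) ℂ) : Prop :=
  ∀ (v : Fin k → Fin k → ℂ) (w : Fin m → Fin m → ℂ),
    (∀ i j, star (v i) ⬝ᵥ v j = if i = j then 1 else 0) →
    (∀ i j, star (w i) ⬝ᵥ w j = if i = j then 1 else 0) →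
    RectSupport (Matrix.of fun i j =>
      ((T (Matrix.vecMulVec (v i) (star (v i)))) *
        Matrix.vecMulVec (w j) (star (w j))).trace)

/-- A positive map `T : M_k → M_m` has total support if for all orthonormal bases
the matrix `(tr(T(v_i v_i*) w_j w_j*))` has total support. -/
def MapTotalSupport {k m : ℕ}
    (T : Matrix (Fin k) (Fin k) ℂ → Matrix (Fin m) (Fin m) ℂ) : Prop :=
  ∀ (v : Fin k → Fin k → ℂ) (w : Fin m → Fin m → ℂ),
    (∀ i j, star (v i) ⬝ᵥ v j = if i = j then 1 else 0) →
    (∀ i j, star (w i) ⬝ᵥ w j = if i = j then 1 else 0) →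
    RectTotalSupport (Matrix.of fun i j =>
      ((T (Matrix.vecMulVec (v i) (star (v i)))) *
        Matrix.vecMulVec (w j) (star (w j))).trace)

/-- `T` is doubly stochastic: `T(Id/√k) = Id/√m` and `T*(Id/√m) = Id/√k` (the latter
expressed through the trace inner product). -/
def IsDoublyStochasticMap {k m : ℕ}
    (T : Matrix (Fin k) (Fin k) ℂ → Matrix (Fin m) (Fin m) ℂ) : Prop :=
  T ((Real.sqrt k : ℂ)⁻¹ • 1) = (Real.sqrt m : ℂ)⁻¹ • 1 ∧
  ∀ X, (Real.sqrt m : ℂ)⁻¹ * (T X).trace = (Real.sqrt k : ℂ)⁻¹ * X.trace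

/-- `S` is the inverse square root `P^{-1/2}` of a positive definite matrix `P`:
`S` is positive definite and `S · S = P⁻¹`. -/
def IsInvSqrt {n : ℕ} (P S : Matrix (Fin n) (Fin n) ℂ) : Prop :=
  S.PosDef ∧ S * S = P⁻¹


section AuxCommute

variable {n : Type*} [Fintype n] [DecidableEq n]

lemma aux_commute_conjTranspose {X V : Matrix n n ℂ} (hV : V.IsHermitian)
    (h : X * V = V * X) : Xᴴ * V = V * Xᴴ := by
  have h2 := congrArg conjTranspose h
  rw [conjTranspose_mul, conjTranspose_mul] at h2
  rw [← hV]
  exact h2.symm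

lemma aux_commute_smul {P C : Matrix n n ℂ} {c : ℂ} (h : P * C = C * P) :
    (c • P) * C = C * (c • P) := by
  rw [smul_mul_assoc, h, mul_smul_comm]

lemma aux_commute_mul {P Q C : Matrix n n ℂ} (h1 : P * C = C * P) (h2 : Q * C = C * Q) :
    (P * Q) * C = C * (P * Q) := by
  rw [mul_assoc, h2, ← mul_assoc, h1, mul_assoc]

lemma aux_commute_inv {M V : Matrix n n ℂ} (h : M * V = V * M) : M⁻¹ * V = V * M⁻¹ := by
  by_cases hu : IsUnit M.det
  · have h2 := congrArg (fun A => M⁻¹ * A * M⁻¹) h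
    simp only [← mul_assoc] at h2
    rw [Matrix.nonsing_inv_mul _ hu, one_mul,
      mul_assoc (M⁻¹ * V) M M⁻¹, Matrix.mul_nonsing_inv _ hu, mul_one] at h2
    exact h2.symm
  · rw [Matrix.nonsing_inv_apply_not_isUnit _ hu, zero_mul, mul_zero]

lemma aux_conj_mul {U : Matrix n n ℂ} (hUU : star U * U = 1) (M N : Matrix n n ℂ) :
    (U * M * star U) * (U * N * star U) = U * (M * N) * star U := by
  simp only [← mul_assoc]
  rw [mul_assoc (U * M) (star U) U, hUU, mul_one, mul_assoc U M N]

lemma aux_unconj {U : Matrix n n ℂ} (hUU : star U * U = 1) (M : Matrix n n ℂ) :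
    star U * (U * M * star U) * U = M := by
  simp only [← mul_assoc]
  rw [hUU, one_mul, mul_assoc M (star U) U, hUU, mul_one]

lemma aux_diag_comm {g : n → ℂ} (hg : ∀ i j, g i * g i = g j * g j → g i = g j)
    {C : Matrix n n ℂ}
    (h : diagonal (fun i => g i * g i) * C = C * diagonal (fun i => g i * g i)) :
    diagonal g * C = C * diagonal g := by
  ext i j
  have hij := congrFun (congrFun h i) j
  rw [Matrix.diagonal_mul, Matrix.mul_diagonal] at hij
  rw [Matrix.diagonal_mul, Matrix.mul_diagonal]
  by_cases he : g i = g j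
  · rw [he, mul_comm]
  · have hzero : C i j = 0 := by
      have hne : g i * g i ≠ g j * g j := fun hc => he (hg i j hc)
      have hsub : (g i * g i - g j * g j) * C i j = 0 := by linear_combination hij
      rcases mul_eq_zero.mp hsub with h5 | h5
      · exact absurd (sub_eq_zero.mp h5) hne
      · exact h5
    rw [hzero, mul_zero, zero_mul]

lemma aux_commute_of_commute_sq {S C : Matrix n n ℂ} (hS : S.PosDef)
    (h : S * S * C = C * (S * S)) : S * C = C * S := by
  have hH : S.IsHermitian := hS.1
  set U : Matrix n n ℂ := (hH.eigenvectorUnitary : Matrix n n ℂ) with hU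
  have hUU : star U * U = 1 := Matrix.mem_unitaryGroup_iff'.mp hH.eigenvectorUnitary.2
  have hUU' : U * star U = 1 := Matrix.mem_unitaryGroup_iff.mp hH.eigenvectorUnitary.2
  set f : n → ℂ := RCLike.ofReal ∘ hH.eigenvalues with hf
  set D : Matrix n n ℂ := diagonal f with hD
  have hspec : S = U * D * star U := hH.spectral_theorem
  set C' : Matrix n n ℂ := star U * C * U with hC'
  have hCconj : U * C' * star U = C := by
    rw [hC']
    simp only [← mul_assoc]
    rw [hUU', one_mul, mul_assoc C U (star U), hUU', mul_one]
  have h2 : D * D * C' = C' * (D * D) := by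
    have h' := h
    rw [hspec, ← hCconj, aux_conj_mul hUU, aux_conj_mul hUU, aux_conj_mul hUU] at h'
    have h3 := congrArg (fun A => star U * A * U) h'
    simpa only [aux_unconj hUU] using h3
  have hDD : D * D = diagonal (fun i => f i * f i) := by
    rw [hD, Matrix.diagonal_mul_diagonal]
  have hginj : ∀ i j, f i * f i = f j * f j → f i = f j := by
    intro i j hc
    have hc2 : hH.eigenvalues i * hH.eigenvalues i = hH.eigenvalues j * hH.eigenvalues j := by
      rw [hf] at hc
      simp only [Function.comp_apply] at hc
      rw [← RCLike.ofReal_mul, ← RCLike.ofReal_mul, RCLike.ofReal_inj] at hc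
      exact hc
    have heq : hH.eigenvalues i = hH.eigenvalues j := by
      rcases mul_self_eq_mul_self_iff.mp hc2 with h5 | h5
      · exact h5
      · have hi := hS.eigenvalues_pos i
        have hj := hS.eigenvalues_pos j
        rw [h5] at hi
        linarith
    rw [hf]
    simp [heq]
  have hDC : D * C' = C' * D := by
    rw [hD]
    apply aux_diag_comm hginj
    rw [← hDD]
    exact h2
  rw [hspec, ← hCconj, aux_conj_mul hUU, aux_conj_mul hUU, hDC]

lemma aux_corner_comm {W R : Matrix n n ℂ} (hW : W * W = W) :
    (W * R * W) * W = W * (W * R * W) := by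
  conv_lhs => rw [mul_assoc (W * R) W W, hW]
  conv_rhs => rw [← mul_assoc W (W * R) W, ← mul_assoc W W R, hW]

lemma aux_corner_zero_right {W₁ W₂ R : Matrix n n ℂ} (h : W₁ * W₂ = 0) :
    (W₁ * R * W₁) * W₂ = 0 := by
  rw [mul_assoc (W₁ * R) W₁ W₂, h, mul_zero]

lemma aux_corner_zero_left {W₁ W₂ R : Matrix n n ℂ} (h : W₂ * W₁ = 0) :
    W₂ * (W₁ * R * W₁) = 0 := by
  rw [← mul_assoc W₂ (W₁ * R) W₁, ← mul_assoc W₂ W₁ R, h, zero_mul, zero_mul]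

lemma posSemidef_iff_eq_transpose_mul_self {A : Matrix n n ℂ} :
    A.PosSemidef ↔ ∃ B : Matrix n n ℂ, A = Bᴴ * B := by
  open MatrixOrder in
  refine ⟨fun hA => ?_, ?_⟩
  · obtain ⟨B, hB⟩ := CStarAlgebra.nonneg_iff_eq_star_mul_self.mp hA.nonneg
    exact ⟨B, hB⟩
  · rintro ⟨B, rfl⟩
    exact posSemidef_conjTranspose_mul_self B

lemma aux_posSemidef_vecMulVec (v : n → ℂ) : (vecMulVec v (star v)).PosSemidef := by
  rw [vecMulVec_eq (Fin 1), ← conjTranspose_replicateCol]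
  exact posSemidef_self_mul_conjTranspose _

lemma aux_trace_vecMulVec_mul (v w : n → ℂ) (M : Matrix n n ℂ) :
    (vecMulVec v w * M).trace = w ⬝ᵥ (M *ᵥ v) := by
  simp only [Matrix.trace, Matrix.diag, mul_apply, vecMulVec_apply, dotProduct, mulVec,
    Finset.mul_sum]
  rw [Finset.sum_comm]
  exact Finset.sum_congr rfl fun j _ => Finset.sum_congr rfl fun i _ => by ring

lemma aux_trace_nonneg {M : Matrix n n ℂ} (hM : M.PosSemidef) : 0 ≤ M.trace := by
  obtain ⟨C, rfl⟩ := posSemidef_iff_eq_transpose_mul_self.mp hM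
  have hexp : (Cᴴ * C).trace = ∑ j, ∑ i, star (C i j) * C i j := by
    simp [Matrix.trace, Matrix.diag, mul_apply, conjTranspose_apply]
  rw [hexp]
  exact Finset.sum_nonneg fun j _ => Finset.sum_nonneg fun i _ => star_mul_self_nonneg _

lemma aux_psd_trace_zero {M : Matrix n n ℂ} (hM : M.PosSemidef) (h : M.trace = 0) : M = 0 := by
  obtain ⟨C, rfl⟩ := posSemidef_iff_eq_transpose_mul_self.mp hM
  have hexp : ∑ j, ∑ i, star (C i j) * C i j = 0 := by
    rw [← h]
    simp [Matrix.trace, Matrix.diag, mul_apply, conjTranspose_apply]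
  have hC : C = 0 := by
    ext i j
    have h1 := (Finset.sum_eq_zero_iff_of_nonneg
      (fun j _ => Finset.sum_nonneg fun i _ => star_mul_self_nonneg (C i j))).mp hexp j
      (Finset.mem_univ j)
    have h2 := (Finset.sum_eq_zero_iff_of_nonneg
      (fun i _ => star_mul_self_nonneg (C i j))).mp h1 i (Finset.mem_univ i)
    simpa using h2
  rw [hC, conjTranspose_zero, mul_zero]

lemma aux_posSemidef_of_quadratic {Z : Matrix n n ℂ}
    (h : ∀ x : n → ℂ, 0 ≤ star x ⬝ᵥ Z *ᵥ x) : Z.PosSemidef := by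
  have hreal : ∀ x : n → ℂ, (starRingEnd ℂ) (star x ⬝ᵥ Z *ᵥ x) = star x ⬝ᵥ Z *ᵥ x := by
    intro x
    rw [Complex.conj_eq_iff_im]
    exact (Complex.le_def.mp (h x)).2.symm
  have expand : ∀ u v : n → ℂ, star (u + v) ⬝ᵥ Z *ᵥ (u + v)
      = star u ⬝ᵥ Z *ᵥ u + star v ⬝ᵥ Z *ᵥ v + (star u ⬝ᵥ Z *ᵥ v + star v ⬝ᵥ Z *ᵥ u) := by
    intro u v
    rw [star_add, mulVec_add, add_dotProduct, dotProduct_add, dotProduct_add]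
    ring
  have smulright : ∀ (c : ℂ) (u v : n → ℂ),
      star u ⬝ᵥ Z *ᵥ (c • v) = c * (star u ⬝ᵥ Z *ᵥ v) := by
    intro c u v
    rw [mulVec_smul, dotProduct_smul, smul_eq_mul]
  have smulleft : ∀ (c : ℂ) (u v : n → ℂ),
      star (c • u) ⬝ᵥ Z *ᵥ v = (starRingEnd ℂ) c * (star u ⬝ᵥ Z *ᵥ v) := by
    intro c u v
    rw [star_smul, smul_dotProduct]
    simp [smul_eq_mul]
  have key : ∀ x y : n → ℂ, (starRingEnd ℂ) (star x ⬝ᵥ Z *ᵥ y) = star y ⬝ᵥ Z *ᵥ x := by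
    intro x y
    have e1 : (starRingEnd ℂ) (star x ⬝ᵥ Z *ᵥ y + star y ⬝ᵥ Z *ᵥ x)
        = star x ⬝ᵥ Z *ᵥ y + star y ⬝ᵥ Z *ᵥ x := by
      have h5 := hreal (x + y)
      rw [expand x y, map_add, map_add, hreal x, hreal y] at h5
      exact add_left_cancel h5
    have e2 : (starRingEnd ℂ) (Complex.I * (star x ⬝ᵥ Z *ᵥ y) - Complex.I * (star y ⬝ᵥ Z *ᵥ x))
        = Complex.I * (star x ⬝ᵥ Z *ᵥ y) - Complex.I * (star y ⬝ᵥ Z *ᵥ x) := by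
      have h5 := hreal (x + Complex.I • y)
      have e0 : star (x + Complex.I • y) ⬝ᵥ Z *ᵥ (x + Complex.I • y)
          = (star x ⬝ᵥ Z *ᵥ x) + (star y ⬝ᵥ Z *ᵥ y)
            + (Complex.I * (star x ⬝ᵥ Z *ᵥ y) - Complex.I * (star y ⬝ᵥ Z *ᵥ x)) := by
        rw [expand]
        simp only [smulright, smulleft, Complex.conj_I]
        linear_combination (-(star y ⬝ᵥ Z *ᵥ y)) * Complex.I_sq
      rw [e0, map_add, map_add, hreal x, hreal y] at h5
      exact add_left_cancel h5
    rw [map_add] at e1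
    rw [map_sub, _root_.map_mul, _root_.map_mul, Complex.conj_I] at e2
    linear_combination e1 / 2 + Complex.I / 2 * e2 + (((starRingEnd ℂ) (star x ⬝ᵥ Z *ᵥ y) + star x ⬝ᵥ Z *ᵥ y - star y ⬝ᵥ Z *ᵥ x - (starRingEnd ℂ) (star y ⬝ᵥ Z *ᵥ x)) / 2) * Complex.I_sq
  have hsingle : ∀ (p q : n), star (Pi.single p (1:ℂ)) ⬝ᵥ Z *ᵥ Pi.single q (1:ℂ) = Z p q := by
    intro p q
    have h1 : star (Pi.single p (1:ℂ)) = (Pi.single p (1:ℂ) : n → ℂ) := by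
      ext r
      rcases eq_or_ne r p with rfl | hr
      · simp
      · simp [Pi.single_apply, hr]
    rw [h1, Matrix.mulVec_single, single_dotProduct]
    simp
  refine posSemidef_iff_dotProduct_mulVec.mpr ⟨?_, ?_⟩
  · ext i j
    rw [conjTranspose_apply]
    have hk := key (Pi.single j (1:ℂ)) (Pi.single i (1:ℂ))
    rw [hsingle j i, hsingle i j] at hk
    exact hk
  · exact h

end AuxCommute

/-- Lemma on commutation: the Sinkhorn scaling matrices `X_n`, `Y_n` commute with the
orthogonal projections `V_i`, `W_i` of an invariant block decomposition. -/
theorem scaling_commutes {k m : ℕ}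
    (T : Matrix (Fin k) (Fin k) ℂ →ₗ[ℂ] Matrix (Fin m) (Fin m) ℂ)
    (Tstar : Matrix (Fin m) (Fin m) ℂ →ₗ[ℂ] Matrix (Fin k) (Fin k) ℂ)
    (hadj : ∀ X Y, ((T X) * Yᴴ).trace = (X * (Tstar Y)ᴴ).trace)
    (hTpos : ∀ A : Matrix (Fin k) (Fin k) ℂ, A.PosSemidef → (T A).PosSemidef)
    (hT1 : (T 1).PosDef) (hTs1 : (Tstar 1).PosDef)
    (X : ℕ → Matrix (Fin k) (Fin k) ℂ) (Y : ℕ → Matrix (Fin m) (Fin m) ℂ)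
    (A : ℕ → Matrix (Fin k) (Fin k) ℂ) (B : ℕ → Matrix (Fin m) (Fin m) ℂ)
    (SA : ℕ → Matrix (Fin k) (Fin k) ℂ) (SB : ℕ → Matrix (Fin m) (Fin m) ℂ)
    (S0 : Matrix (Fin m) (Fin m) ℂ)
    (hX0 : X 0 = 1)
    (hS0 : IsInvSqrt (T ((Real.sqrt k : ℂ)⁻¹ • 1)) S0)
    (hY0 : Y 0 = (Real.sqrt (Real.sqrt m) : ℂ)⁻¹ • S0)
    (hA : ∀ n, A n = (X n)ᴴ * Tstar ((Real.sqrt m : ℂ)⁻¹ • ((Y n)ᴴ * Y n)) * X n)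
    (hSA : ∀ n, IsInvSqrt (A n) (SA n))
    (hXs : ∀ n, X (n + 1) = (Real.sqrt (Real.sqrt k) : ℂ)⁻¹ • (X n * SA n))
    (hB : ∀ n, B n = Y n * T ((Real.sqrt k : ℂ)⁻¹ • (X (n + 1) * (X (n + 1))ᴴ)) * (Y n)ᴴ)
    (hSB : ∀ n, IsInvSqrt (B n) (SB n))
    (hYs : ∀ n, Y (n + 1) = (Real.sqrt (Real.sqrt m) : ℂ)⁻¹ • (SB n * Y n))
    {s : ℕ} (V : Fin s → Matrix (Fin k) (Fin k) ℂ)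
    (W : Fin s → Matrix (Fin m) (Fin m) ℂ)
    (hVproj : ∀ i, (V i).IsHermitian ∧ V i * V i = V i)
    (hWproj : ∀ i, (W i).IsHermitian ∧ W i * W i = W i)
    (hVorth : ∀ i j, i ≠ j → V i * V j = 0)
    (hWorth : ∀ i j, i ≠ j → W i * W j = 0)
    (hVsum : ∑ i, V i = 1) (hWsum : ∑ i, W i = 1)
    (hTV : ∀ i M, T (V i * M * V i) = W i * T (V i * M * V i) * W i) :
    ∀ n i, X n * V i = V i * X n ∧ Y n * W i = W i * Y n := by
  -- decomposition of commuting matrices into corners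
  have hVdecomp : ∀ P : Matrix (Fin k) (Fin k) ℂ, (∀ i, P * V i = V i * P) →
      P = ∑ i, V i * P * V i := by
    intro P hP
    calc P = (∑ i, V i) * P := by rw [hVsum, one_mul]
    _ = ∑ i, V i * P := by rw [Finset.sum_mul]
    _ = ∑ i, V i * P * V i := Finset.sum_congr rfl fun i _ => by
        rw [mul_assoc, hP i, ← mul_assoc, (hVproj i).2]
  have hWdecomp : ∀ Q : Matrix (Fin m) (Fin m) ℂ, (∀ i, Q * W i = W i * Q) →
      Q = ∑ i, W i * Q * W i := by
    intro Q hQ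
    calc Q = (∑ i, W i) * Q := by rw [hWsum, one_mul]
    _ = ∑ i, W i * Q := by rw [Finset.sum_mul]
    _ = ∑ i, W i * Q * W i := Finset.sum_congr rfl fun i _ => by
        rw [mul_assoc, hQ i, ← mul_assoc, (hWproj i).2]
  -- T maps the commutant of the V's to the commutant of the W's
  have hT_comm : ∀ P : Matrix (Fin k) (Fin k) ℂ, (∀ i, P * V i = V i * P) →
      ∀ j, T P * W j = W j * T P := by
    intro P hP j
    rw [hVdecomp P hP, map_sum, Finset.sum_mul, Finset.mul_sum]
    refine Finset.sum_congr rfl fun i _ => ?_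
    rw [hTV i P]
    rcases eq_or_ne i j with rfl | hij
    · exact aux_corner_comm (hWproj i).2
    · rw [aux_corner_zero_right (hWorth i j hij), aux_corner_zero_left (hWorth j i hij.symm)]
  -- T (V j) is supported in the corner of W j
  have hTVj : ∀ j, T (V j) = W j * T (V j) * W j := by
    intro j
    have h5 := hTV j 1
    simpa only [mul_one, (hVproj j).2] using h5
  -- T* maps positive semidefinite elements of the commutant of the W's
  -- to the commutant of the V's
  have hTstar_comm : ∀ Q : Matrix (Fin m) (Fin m) ℂ, Q.PosSemidef →
      (∀ i, Q * W i = W i * Q) → ∀ j, Tstar Q * V j = V j * Tstar Q := by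
    intro Q hQ hQW j
    have hZ : ∀ i : Fin s, ∀ j0, Tstar (W i * Q * W i) * V j0 = V j0 * Tstar (W i * Q * W i) := by
      intro i
      have hNpsd : (W i * Q * W i).PosSemidef := by
        have h5 := hQ.conjTranspose_mul_mul_same (W i)
        rwa [(hWproj i).1] at h5
      have hZpsd : (Tstar (W i * Q * W i)).PosSemidef := by
        have hquad : ∀ v : Fin k → ℂ, 0 ≤ star v ⬝ᵥ (Tstar (W i * Q * W i))ᴴ *ᵥ v := by
          intro v
          have htr := hadj (vecMulVec v (star v)) (W i * Q * W i)
          rw [hNpsd.1.eq] at htr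
          rw [aux_trace_vecMulVec_mul] at htr
          rw [← htr]
          obtain ⟨C, hC⟩ := posSemidef_iff_eq_transpose_mul_self.mp hNpsd
          rw [hC, ← mul_assoc, Matrix.trace_mul_cycle]
          exact aux_trace_nonneg
            (((hTpos _ (aux_posSemidef_vecMulVec v)).mul_mul_conjTranspose_same C))
        have h6 := aux_posSemidef_of_quadratic hquad
        simpa using h6.conjTranspose
      have hVZ : ∀ j', j' ≠ i → Tstar (W i * Q * W i) * V j' = 0 ∧
          V j' * Tstar (W i * Q * W i) = 0 := by
        intro j' hne
        have htr := hadj (V j') (W i * Q * W i)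
        rw [hNpsd.1.eq, hZpsd.1.eq] at htr
        rw [hTVj j'] at htr
        have hzero : W j' * T (V j') * W j' * (W i * Q * W i) = 0 := by
          simp only [mul_assoc]
          rw [← mul_assoc (W j') (W i) (Q * W i), hWorth j' i hne, zero_mul, mul_zero, mul_zero]
        rw [hzero, Matrix.trace_zero] at htr
        have htr0 : (V j' * Tstar (W i * Q * W i)).trace = 0 := htr.symm
        have hpsd2 : (V j' * Tstar (W i * Q * W i) * V j').PosSemidef := by
          have h5 := hZpsd.mul_mul_conjTranspose_same (V j')
          rwa [(hVproj j').1] at h5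
        have htrz : (V j' * Tstar (W i * Q * W i) * V j').trace = 0 := by
          rw [Matrix.trace_mul_cycle, (hVproj j').2]
          exact htr0
        have hzero2 := aux_psd_trace_zero hpsd2 htrz
        obtain ⟨C, hCeq⟩ := posSemidef_iff_eq_transpose_mul_self.mp hZpsd
        have hCV : C * V j' = 0 := by
          have h7 : (C * V j')ᴴ * (C * V j') = 0 := by
            rw [conjTranspose_mul, (hVproj j').1]
            calc V j' * Cᴴ * (C * V j') = V j' * (Cᴴ * C) * V j' := by
                  rw [mul_assoc, mul_assoc, mul_assoc]
            _ = 0 := by rw [← hCeq]; exact hzero2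
          exact conjTranspose_mul_self_eq_zero.mp h7
        have hZV : Tstar (W i * Q * W i) * V j' = 0 := by
          rw [hCeq, mul_assoc, hCV, mul_zero]
        have hVZ0 : V j' * Tstar (W i * Q * W i) = 0 := by
          have h8 := congrArg conjTranspose hZV
          rwa [conjTranspose_mul, hZpsd.1.eq, (hVproj j').1, conjTranspose_zero] at h8
        exact ⟨hZV, hVZ0⟩
      intro j0
      rcases eq_or_ne j0 i with rfl | hji
      · have hZ1 : Tstar (W j0 * Q * W j0) * V j0 = Tstar (W j0 * Q * W j0) := by
          have hs : ∑ a, Tstar (W j0 * Q * W j0) * V a = Tstar (W j0 * Q * W j0) * V j0 :=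
            Finset.sum_eq_single j0 (fun b _ hb => (hVZ b hb).1)
              (fun hmem => absurd (Finset.mem_univ j0) hmem)
          rw [← hs, ← Finset.mul_sum, hVsum, mul_one]
        have hZ2 : V j0 * Tstar (W j0 * Q * W j0) = Tstar (W j0 * Q * W j0) := by
          have hs : ∑ a, V a * Tstar (W j0 * Q * W j0) = V j0 * Tstar (W j0 * Q * W j0) :=
            Finset.sum_eq_single j0 (fun b _ hb => (hVZ b hb).2)
              (fun hmem => absurd (Finset.mem_univ j0) hmem)
          rw [← hs, ← Finset.sum_mul, hVsum, one_mul]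
        rw [hZ1, hZ2]
      · rw [(hVZ j0 hji).1, (hVZ j0 hji).2]
    rw [hWdecomp Q hQW, map_sum, Finset.sum_mul, Finset.mul_sum]
    exact Finset.sum_congr rfl fun i _ => hZ i j
  -- main induction
  intro n
  induction n with
  | zero =>
    intro i
    constructor
    · rw [hX0, one_mul, mul_one]
    · have hone : ∀ i', (1 : Matrix (Fin k) (Fin k) ℂ) * V i' = V i' * 1 := by
        intro i'; rw [one_mul, mul_one]
      have hP : ∀ j, T ((Real.sqrt k : ℂ)⁻¹ • 1) * W j = W j * T ((Real.sqrt k : ℂ)⁻¹ • 1) := by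
        intro j
        rw [_root_.map_smul]
        exact aux_commute_smul (hT_comm 1 hone j)
      have hS0c : S0 * W i = W i * S0 :=
        aux_commute_of_commute_sq hS0.1 (by rw [hS0.2]; exact aux_commute_inv (hP i))
      rw [hY0]
      exact aux_commute_smul hS0c
  | succ n ih =>
    have hXn : ∀ i, X n * V i = V i * X n := fun i => (ih i).1
    have hYn : ∀ i, Y n * W i = W i * Y n := fun i => (ih i).2
    have hYY : ∀ i, ((Y n)ᴴ * Y n) * W i = W i * ((Y n)ᴴ * Y n) := fun i =>
      aux_commute_mul (aux_commute_conjTranspose (hWproj i).1 (hYn i)) (hYn i)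
    have hAcomm : ∀ i, A n * V i = V i * A n := by
      intro i
      rw [hA n]
      refine aux_commute_mul (aux_commute_mul
        (aux_commute_conjTranspose (hVproj i).1 (hXn i)) ?_) (hXn i)
      rw [_root_.map_smul]
      exact aux_commute_smul
        (hTstar_comm _ (posSemidef_conjTranspose_mul_self (Y n)) hYY i)
    have hSAcomm : ∀ i, SA n * V i = V i * SA n := fun i =>
      aux_commute_of_commute_sq (hSA n).1 (by rw [(hSA n).2]; exact aux_commute_inv (hAcomm i))
    have hXn1 : ∀ i, X (n + 1) * V i = V i * X (n + 1) := by
      intro i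
      rw [hXs n]
      exact aux_commute_smul (aux_commute_mul (hXn i) (hSAcomm i))
    have hPP : ∀ i, (X (n + 1) * (X (n + 1))ᴴ) * V i = V i * (X (n + 1) * (X (n + 1))ᴴ) :=
      fun i => aux_commute_mul (hXn1 i) (aux_commute_conjTranspose (hVproj i).1 (hXn1 i))
    have hBcomm : ∀ i, B n * W i = W i * B n := by
      intro i
      rw [hB n]
      refine aux_commute_mul (aux_commute_mul (hYn i) ?_)
        (aux_commute_conjTranspose (hWproj i).1 (hYn i))
      rw [_root_.map_smul]
      exact aux_commute_smul (hT_comm _ hPP i)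
    have hSBcomm : ∀ i, SB n * W i = W i * SB n := fun i =>
      aux_commute_of_commute_sq (hSB n).1 (by rw [(hSB n).2]; exact aux_commute_inv (hBcomm i))
    intro i
    refine ⟨hXn1 i, ?_⟩
    rw [hYs n]
    exact aux_commute_smul (aux_commute_mul (hSBcomm i) (hYn i))
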